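/- Let w̃ ∈ C²([0,1]) with w̃(0) = w̃(1) = 0, and define B(w̃) := ∫₀¹ (ε² w̃_xx² + w̃_x²) dx. Then ε ‖w̃_x‖_{L^∞}² ≤ (1 + ε) B(w̃). -/

import Mathlib

/-- For w̃ ∈ C²([0,1]) vanishing at the endpoints,
ε ‖w̃_x‖_{L^∞}² ≤ (1 + ε) B(w̃) where B(w̃) = ∫₀¹ (ε² w̃'' ² + w̃' ²). -/
theorem stmt5 (ε : ℝ) (hε : 0 < ε) (w : ℝ → ℝ) (hw : ContDiff ℝ 2 w)
    (h0 : w 0 = 0) (h1 : w 1 = 0) :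
    ∀ x ∈ Set.Icc (0:ℝ) 1,
      ε * (deriv w x) ^ 2
        ≤ (1 + ε) * ∫ y in (0:ℝ)..1, (ε ^ 2 * (deriv (deriv w) y) ^ 2 + (deriv w y) ^ 2) := by
  intro x hx
  obtain ⟨hx0, hx1⟩ := hx
  have hw2 : ContDiff ℝ (1 + 1) w := by norm_num at hw ⊢; exact hw
  rw [contDiff_succ_iff_deriv] at hw2
  obtain ⟨hdiff, -, hw1⟩ := hw2
  have hw1' : ContDiff ℝ (0 + 1) (deriv w) := by norm_num; exact hw1
  rw [contDiff_succ_iff_deriv] at hw1'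
  obtain ⟨hdiff1, -, hw0⟩ := hw1'
  have hc1 : Continuous (deriv w) := hw1.continuous
  have hc2 : Continuous (deriv (deriv w)) := hw0.continuous
  -- Rolle
  obtain ⟨ξ, hξ, hξ0⟩ := exists_deriv_eq_zero (by norm_num : (0:ℝ) < 1)
    hdiff.continuous.continuousOn (h0.trans h1.symm)
  have hξ01 : ξ ∈ Set.Icc (0:ℝ) 1 := Set.Ioo_subset_Icc_self hξ
  -- FTC for (deriv w)^2
  have hF : ∀ y : ℝ, HasDerivAt (fun z => (deriv w z) ^ 2)
      (2 * deriv w y * deriv (deriv w) y) y := by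
    intro y
    have := ((hdiff1 y).hasDerivAt.fun_pow 2)
    simpa [mul_comm, mul_assoc, mul_left_comm] using this
  have hInt : ∀ a b : ℝ, IntervalIntegrable (fun y => 2 * deriv w y * deriv (deriv w) y)
      MeasureTheory.volume a b := fun a b =>
    ((continuous_const.mul hc1).mul hc2).intervalIntegrable a b
  have hFTC : ∀ a b : ℝ, ∫ y in a..b, 2 * deriv w y * deriv (deriv w) y
      = (deriv w b) ^ 2 - (deriv w a) ^ 2 := fun a b =>
    intervalIntegral.integral_eq_sub_of_hasDerivAt (fun y _ => hF y) (hInt a b)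
  set g : ℝ → ℝ := fun y => ε ^ 2 * (deriv (deriv w) y) ^ 2 + (deriv w y) ^ 2 with hg
  have hgc : Continuous g := by fun_prop
  have hgnn : ∀ y, 0 ≤ g y := fun y => by positivity
  have hgint : ∀ a b : ℝ, IntervalIntegrable g MeasureTheory.volume a b :=
    fun a b => hgc.intervalIntegrable a b
  have hptwise : ∀ y, ε * (2 * deriv w y * deriv (deriv w) y) ≤ g y := by
    intro y
    have h := sq_nonneg (ε * deriv (deriv w) y - deriv w y)
    simp only [hg]
    nlinarith [h]
  have hptwise' : ∀ y, ε * (-(2 * deriv w y * deriv (deriv w) y)) ≤ g y := by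
    intro y
    have h := sq_nonneg (ε * deriv (deriv w) y + deriv w y)
    simp only [hg]
    nlinarith [h]
  have key : ε * (deriv w x) ^ 2 ≤ ∫ y in (0:ℝ)..1, g y := by
    rcases le_total ξ x with hle | hle
    · have : ε * (deriv w x) ^ 2 = ∫ y in ξ..x, ε * (2 * deriv w y * deriv (deriv w) y) := by
        rw [intervalIntegral.integral_const_mul, hFTC, hξ0]; ring
      rw [this]
      calc ∫ y in ξ..x, ε * (2 * deriv w y * deriv (deriv w) y)
          ≤ ∫ y in ξ..x, g y := by
            apply intervalIntegral.integral_mono_on hle _ (hgint ξ x) (fun y _ => hptwise y)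
            exact (continuous_const.mul ((continuous_const.mul hc1).mul hc2)).intervalIntegrable _ _
        _ ≤ ∫ y in (0:ℝ)..1, g y :=
            intervalIntegral.integral_mono_interval hξ01.1 hle hx1
              (Filter.Eventually.of_forall hgnn) (hgint 0 1)
    · have : ε * (deriv w x) ^ 2 = ∫ y in x..ξ, ε * (-(2 * deriv w y * deriv (deriv w) y)) := by
        rw [show (fun y => ε * (-(2 * deriv w y * deriv (deriv w) y)))
          = fun y => -(ε * (2 * deriv w y * deriv (deriv w) y)) by funext y; ring]
        rw [intervalIntegral.integral_neg, intervalIntegral.integral_const_mul, hFTC, hξ0]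
        ring
      rw [this]
      calc ∫ y in x..ξ, ε * (-(2 * deriv w y * deriv (deriv w) y))
          ≤ ∫ y in x..ξ, g y := by
            apply intervalIntegral.integral_mono_on hle _ (hgint x ξ) (fun y _ => hptwise' y)
            exact (continuous_const.mul (((continuous_const.mul hc1).mul hc2)).neg).intervalIntegrable _ _
        _ ≤ ∫ y in (0:ℝ)..1, g y :=
            intervalIntegral.integral_mono_interval hx0 hle hξ01.2
              (Filter.Eventually.of_forall hgnn) (hgint 0 1)
  have hB : 0 ≤ ∫ y in (0:ℝ)..1, g y :=
    intervalIntegral.integral_nonneg (by norm_num) (fun y _ => hgnn y)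
  nlinarith [key, hB]
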